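/- For every ε > 0, the probability that the random graph G_n contains a clique on ⌈εn⌉ vertices (equivalently, a K_{⌈εn⌉}-minor with all bags of size 1) tends to 0 as n tends to infinity. -/

import Mathlib

open MeasureTheory
open scoped ENNReal

/-- The vertex set `{a_1, …, a_n, b_1, …, b_n}`: `(i, false)` is `a_i` and `(i, true)` is
`b_i`. -/
abbrev Vtx (n : ℕ) := Fin n × Bool

/-- The index set of unordered pairs `i < j`. -/
abbrev PairIdx (n : ℕ) := {p : Fin n × Fin n // p.1 < p.2}

/-- The sample space: for each pair `i < j`, one of the four possible pairs (encoded by an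
element of `Fin 4` via `code`) is chosen to be the non-edge. -/
abbrev Omega (n : ℕ) := PairIdx n → Fin 4

/-- Encoding of the four pairs `(a_i,a_j), (a_i,b_j), (b_i,a_j), (b_i,b_j)` as `Fin 4`. -/
def code : Bool × Bool → Fin 4
  | (false, false) => 0
  | (false, true) => 1
  | (true, false) => 2
  | (true, true) => 3

instance (n : ℕ) : MeasurableSpace (Omega n) := ⊤

/-- The random graph `G_n` determined by the sample point `ω`: for `i < j`, the vertices
`(i, x)` and `(j, y)` are adjacent iff `(x, y)` is not the uniformly chosen excluded pair
`ω ⟨(i, j), _⟩`; `a_i` and `b_i` are never adjacent. -/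
def Gn (n : ℕ) (ω : Omega n) : SimpleGraph (Vtx n) where
  Adj u v :=
    (∃ h : u.1 < v.1, ω ⟨(u.1, v.1), h⟩ ≠ code (u.2, v.2)) ∨
    (∃ h : v.1 < u.1, ω ⟨(v.1, u.1), h⟩ ≠ code (v.2, u.2))
  symm := by
    constructor
    rintro u v (⟨h1, h2⟩ | ⟨h1, h2⟩)
    · exact Or.inr ⟨h1, h2⟩
    · exact Or.inl ⟨h1, h2⟩
  loopless := by
    constructor
    rintro u (⟨h1, _⟩ | ⟨h1, _⟩) <;> exact absurd h1 (lt_irrefl _)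

/-- The uniform probability measure on the sample space: the excluded pairs are chosen
independently and uniformly at random. -/
noncomputable def Pn (n : ℕ) : Measure (Omega n) :=
  (PMF.uniformOfFintype (Omega n)).toMeasure


open scoped NNReal

open Filter in
private lemma aux_choose_ge (ε : ℝ) (hε : 0 < ε) :
    ∀ᶠ n : ℕ in atTop, 8 * n ≤ (⌈ε * (n : ℝ)⌉₊).choose 2 := by
  rw [eventually_atTop]
  refine ⟨⌈17 / ε⌉₊ + ⌈17 / ε ^ 2⌉₊, fun n hn => ?_⟩
  set k := ⌈ε * (n : ℝ)⌉₊ with hk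
  have hkn : ε * n ≤ (k : ℝ) := Nat.le_ceil _
  have hn1 : (⌈17 / ε⌉₊ : ℝ) ≤ n := Nat.cast_le.mpr (le_trans (Nat.le_add_right _ _) hn)
  have hn2 : (⌈17 / ε ^ 2⌉₊ : ℝ) ≤ n := Nat.cast_le.mpr (le_trans (Nat.le_add_left _ _) hn)
  have h1 : 17 ≤ ε * n := by
    have := (Nat.ceil_le.mp (le_refl ⌈17 / ε⌉₊)).trans hn1
    rw [div_le_iff₀ hε] at this
    linarith
  have h2 : 17 ≤ ε ^ 2 * n := by
    have := (Nat.ceil_le.mp (le_refl ⌈17 / ε ^ 2⌉₊)).trans hn2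
    rw [div_le_iff₀ (by positivity)] at this
    linarith
  have hk17 : (17 : ℝ) ≤ k := le_trans h1 hkn
  have hnn : (0 : ℝ) ≤ n := Nat.cast_nonneg n
  have hreal : (16 : ℝ) * n ≤ (k : ℝ) * ((k : ℝ) - 1) := by
    nlinarith [sq_nonneg ((k : ℝ) - ε * n), mul_nonneg (le_of_lt hε) hnn]
  have hk1 : 1 ≤ k := by
    have : (1:ℝ) ≤ (k:ℝ) := by linarith
    exact_mod_cast this
  have hnat : 16 * n ≤ k * (k - 1) := by
    have : ((16 * n : ℕ) : ℝ) ≤ ((k * (k - 1) : ℕ) : ℝ) := by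
      push_cast [Nat.cast_sub hk1]
      linarith
    exact_mod_cast this
  rw [Nat.choose_two_right]
  calc 8 * n = 16 * n / 2 := by omega
    _ ≤ k * (k - 1) / 2 := Nat.div_le_div_right hnat

private lemma aux_Pn_apply (n : ℕ) (s : Set (Omega n)) :
    Pn n s = (s.ncard : ℝ≥0∞) / (Fintype.card (Omega n) : ℝ≥0∞) := by
  classical
  haveI : MeasurableSingletonClass (Omega n) := ⟨fun _ => MeasurableSpace.measurableSet_top⟩
  rw [Pn, PMF.toMeasure_apply_fintype]
  rw [Finset.sum_indicator_eq_sum_filter]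
  simp only [PMF.uniformOfFintype_apply, Finset.sum_const, nsmul_eq_mul]
  have h1 : (Finset.univ.filter (· ∈ s)) = s.toFinset := by
    ext x; simp
  rw [h1, ← Set.ncard_eq_toFinset_card', div_eq_mul_inv]

private lemma aux_event_ncard (n : ℕ) (T : Finset (PairIdx n)) (c : PairIdx n → Fin 4) :
    {ω : Omega n | ∀ p ∈ T, ω p ≠ c p}.ncard
      = 3 ^ T.card * 4 ^ (Fintype.card (PairIdx n) - T.card) := by
  classical
  have h1 : {ω : Omega n | ∀ p ∈ T, ω p ≠ c p}
      = ↑(Fintype.piFinset (fun p => if p ∈ T then ({c p}ᶜ : Finset (Fin 4)) else Finset.univ)) := by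
    ext ω
    simp only [Set.mem_setOf_eq, Finset.coe_sort_coe, Finset.mem_coe, Fintype.mem_piFinset]
    constructor
    · intro h p
      by_cases hp : p ∈ T <;> simp [hp]
      exact h p hp
    · intro h p hp
      have := h p
      simp [hp] at this
      exact this
  rw [h1, Set.ncard_coe_finset, Fintype.card_piFinset]
  have h2 : ∀ p : PairIdx n,
      (if p ∈ T then ({c p}ᶜ : Finset (Fin 4)) else Finset.univ).card
      = if p ∈ T then 3 else 4 := by
    intro p; by_cases hp : p ∈ T <;> simp [hp, Finset.card_compl]
  simp only [h2]
  rw [Finset.prod_ite, Finset.prod_const, Finset.prod_const]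
  congr 1
  · congr 1; rw [Finset.filter_mem_eq_inter, Finset.univ_inter]
  · congr 1
    rw [Finset.filter_not, Finset.filter_mem_eq_inter, Finset.univ_inter,
      Finset.card_sdiff_of_subset (Finset.subset_univ T), Finset.card_univ]

private lemma aux_event_prob (n : ℕ) (T : Finset (PairIdx n)) (c : PairIdx n → Fin 4) :
    Pn n {ω : Omega n | ∀ p ∈ T, ω p ≠ c p} ≤ (3 / 4 : ℝ≥0∞) ^ T.card := by
  classical
  rw [aux_Pn_apply, aux_event_ncard]
  have hN : Fintype.card (Omega n) = 4 ^ Fintype.card (PairIdx n) := by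
    rw [Fintype.card_fun, Fintype.card_fin]
  have hle : T.card ≤ Fintype.card (PairIdx n) := Finset.card_le_univ T
  have h4 : (4 : ℝ≥0∞) ^ Fintype.card (PairIdx n)
      = 4 ^ T.card * 4 ^ (Fintype.card (PairIdx n) - T.card) := by
    rw [← pow_add, Nat.add_sub_cancel' hle]
  push_cast
  rw [hN]
  push_cast
  rw [h4, ENNReal.mul_div_mul_right _ _ (by positivity) (ENNReal.pow_ne_top (by norm_num)),
    div_eq_mul_inv, div_eq_mul_inv, mul_pow, ENNReal.inv_pow]

private lemma aux_TS_card (n : ℕ) (I : Finset (Fin n)) :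
    (Finset.univ.filter (fun p : PairIdx n => p.1.1 ∈ I ∧ p.1.2 ∈ I)).card
      = I.card.choose 2 := by
  classical
  set A := I.offDiag.filter (fun q => q.1 < q.2) with hA
  set B := I.offDiag.filter (fun q => ¬ q.1 < q.2) with hB
  have hAB : A.card + B.card = I.offDiag.card :=
    Finset.card_filter_add_card_filter_not _
  have hBA : B.card = A.card := by
    apply Finset.card_bij (fun q _ => Prod.swap q)
    · rintro ⟨a, b⟩ hq
      simp only [hB, Finset.mem_filter, Finset.mem_offDiag, not_lt] at hq
      obtain ⟨⟨ha, hb, hne⟩, hle⟩ := hq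
      simp only [hA, Finset.mem_filter, Finset.mem_offDiag, Prod.swap]
      exact ⟨⟨hb, ha, fun h => hne h.symm⟩, lt_of_le_of_ne hle (fun h => hne h.symm)⟩
    · rintro ⟨a, b⟩ _ ⟨c, d⟩ _ h
      simpa [Prod.ext_iff, and_comm] using h
    · rintro ⟨a, b⟩ hq
      refine ⟨(b, a), ?_, rfl⟩
      simp only [hA, Finset.mem_filter, Finset.mem_offDiag] at hq
      obtain ⟨⟨ha, hb, hne⟩, hlt⟩ := hq
      simp only [hB, Finset.mem_filter, Finset.mem_offDiag, not_lt]
      exact ⟨⟨hb, ha, fun h => hne h.symm⟩, le_of_lt hlt⟩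
  have hT : (Finset.univ.filter (fun p : PairIdx n => p.1.1 ∈ I ∧ p.1.2 ∈ I)).card
      = A.card := by
    apply Finset.card_bij (fun p _ => p.1)
    · rintro ⟨⟨a, b⟩, hlt⟩ hp
      simp only [Finset.mem_filter, Finset.mem_univ, true_and] at hp
      simp only [hA, Finset.mem_filter, Finset.mem_offDiag]
      exact ⟨⟨hp.1, hp.2, ne_of_lt hlt⟩, hlt⟩
    · rintro ⟨q, _⟩ _ ⟨q', _⟩ _ h
      exact Subtype.ext h
    · rintro ⟨a, b⟩ hq
      simp only [hA, Finset.mem_filter, Finset.mem_offDiag] at hq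
      exact ⟨⟨(a, b), hq.2⟩, by simp [hq.1.1, hq.1.2.1], rfl⟩
  have hoff : I.offDiag.card = I.card * I.card - I.card := Finset.offDiag_card _
  have hmul : I.card * I.card - I.card = I.card * (I.card - 1) := by
    cases I.card with
    | zero => simp
    | succ m =>
      have : (m+1)*(m+1) = (m+1)*m + (m+1) := by ring
      have : (m+1)*((m+1)-1) = (m+1)*m := by simp
      omega
  rw [Nat.choose_two_right, hT]
  omega

private lemma aux_perS (n : ℕ) (S : Finset (Vtx n)) :
    Pn n {ω : Omega n | (Gn n ω).IsClique (S : Set (Vtx n))}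
      ≤ (3 / 4 : ℝ≥0∞) ^ (S.card.choose 2) := by
  classical
  by_cases hinj : Set.InjOn Prod.fst (S : Set (Vtx n))
  · set I : Finset (Fin n) := S.image Prod.fst with hI
    set b : Fin n → Bool := fun i => decide ((i, true) ∈ S) with hb
    have hmem : ∀ i ∈ I, (i, b i) ∈ S := by
      intro i hi
      obtain ⟨u, hu, hfst⟩ := Finset.mem_image.mp hi
      cases hub : u.2 with
      | true =>
        have : (i, true) ∈ S := by rwa [← hfst, ← hub, Prod.mk.eta]
        simp [hb, this]
      | false =>
        have hif : (i, false) ∈ S := by rwa [← hfst, ← hub, Prod.mk.eta]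
        have hnt : (i, true) ∉ S := by
          intro ht
          have := hinj (Finset.mem_coe.mpr ht) (Finset.mem_coe.mpr hif) rfl
          simp at this
        simpa [hb, hnt]
    set T : Finset (PairIdx n) :=
      Finset.univ.filter (fun p : PairIdx n => p.1.1 ∈ I ∧ p.1.2 ∈ I) with hT
    set c : PairIdx n → Fin 4 := fun p => code (b p.1.1, b p.1.2) with hc
    have hsub : {ω : Omega n | (Gn n ω).IsClique (S : Set (Vtx n))}
        ⊆ {ω : Omega n | ∀ p ∈ T, ω p ≠ c p} := by
      intro ω hω
      rintro ⟨⟨i, j⟩, hij⟩ hp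
      simp only [hT, Finset.mem_filter] at hp
      obtain ⟨-, hiI, hjI⟩ := hp
      have hui := hmem i hiI
      have huj := hmem j hjI
      have hne : ((i, b i) : Vtx n) ≠ (j, b j) := by
        intro h
        exact absurd (congrArg Prod.fst h) (ne_of_lt hij)
      have hadj := hω (Finset.mem_coe.mpr hui) (Finset.mem_coe.mpr huj) hne
      rcases hadj with ⟨h1, h2⟩ | ⟨h1, _⟩
      · exact h2
      · exact absurd h1 (not_lt.mpr (le_of_lt hij))
    calc Pn n {ω : Omega n | (Gn n ω).IsClique (S : Set (Vtx n))}
        ≤ Pn n {ω : Omega n | ∀ p ∈ T, ω p ≠ c p} :=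
          measure_mono hsub
      _ ≤ (3 / 4 : ℝ≥0∞) ^ T.card := aux_event_prob n T c
      _ = (3 / 4 : ℝ≥0∞) ^ (S.card.choose 2) := by
          rw [hT, aux_TS_card, hI, Finset.card_image_of_injOn hinj]
  · have hempty : {ω : Omega n | (Gn n ω).IsClique (S : Set (Vtx n))} = ∅ := by
      ext ω
      simp only [Set.mem_setOf_eq, Set.mem_empty_iff_false, iff_false]
      intro hω
      apply hinj
      intro u hu v hv hfst
      by_contra hne
      rcases hω hu hv hne with ⟨h1, _⟩ | ⟨h1, _⟩
      · exact absurd hfst (ne_of_lt h1)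
      · exact absurd hfst.symm (ne_of_lt h1)
    rw [hempty, measure_empty]
    exact zero_le

private lemma aux_union_bound (n k : ℕ) :
    Pn n {ω : Omega n | ∃ S : Finset (Vtx n), S.card = k ∧ (Gn n ω).IsClique (S : Set (Vtx n))}
      ≤ (2 : ℝ≥0∞) ^ (2 * n) * (3 / 4 : ℝ≥0∞) ^ (k.choose 2) := by
  classical
  set F : Finset (Finset (Vtx n)) :=
    (Finset.univ : Finset (Finset (Vtx n))).filter (fun S => S.card = k) with hF
  have hsub : {ω : Omega n | ∃ S : Finset (Vtx n), S.card = k ∧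
      (Gn n ω).IsClique (S : Set (Vtx n))}
      ⊆ ⋃ S ∈ F, {ω : Omega n | (Gn n ω).IsClique (S : Set (Vtx n))} := by
    rintro ω ⟨S, hcard, hcl⟩
    exact Set.mem_biUnion (Finset.mem_filter.mpr ⟨Finset.mem_univ _, hcard⟩) hcl
  calc Pn n {ω : Omega n | ∃ S : Finset (Vtx n), S.card = k ∧
          (Gn n ω).IsClique (S : Set (Vtx n))}
      ≤ Pn n (⋃ S ∈ F, {ω : Omega n | (Gn n ω).IsClique (S : Set (Vtx n))}) :=
        measure_mono hsub
    _ ≤ ∑ S ∈ F, Pn n {ω : Omega n | (Gn n ω).IsClique (S : Set (Vtx n))} :=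
        measure_biUnion_finset_le _ _
    _ ≤ F.card • ((3 / 4 : ℝ≥0∞) ^ (k.choose 2)) := by
        apply Finset.sum_le_card_nsmul
        intro S hS
        have hcard : S.card = k := (Finset.mem_filter.mp hS).2
        calc Pn n {ω : Omega n | (Gn n ω).IsClique (S : Set (Vtx n))}
            ≤ (3 / 4 : ℝ≥0∞) ^ (S.card.choose 2) := aux_perS n S
          _ = (3 / 4 : ℝ≥0∞) ^ (k.choose 2) := by rw [hcard]
    _ ≤ (2 : ℝ≥0∞) ^ (2 * n) * (3 / 4 : ℝ≥0∞) ^ (k.choose 2) := by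
        rw [nsmul_eq_mul]
        apply mul_le_mul_left
        have h1 : F.card ≤ 2 ^ (2 * n) := by
          calc F.card ≤ (Finset.univ : Finset (Finset (Vtx n))).card :=
                Finset.card_filter_le _ _
            _ = 2 ^ (2 * n) := by
                rw [Finset.card_univ, Fintype.card_finset]
                congr 1
                simp [mul_comm]
        calc (F.card : ℝ≥0∞) ≤ ((2 ^ (2 * n) : ℕ) : ℝ≥0∞) := Nat.cast_le.mpr h1
          _ = (2 : ℝ≥0∞) ^ (2 * n) := by push_cast; rfl

open Filter in
/-- For every `ε > 0`, the probability that the random graph `G_n` contains a clique on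
`⌈εn⌉` vertices tends to `0` as `n` tends to infinity. -/
theorem statement14 (ε : ℝ) (hε : 0 < ε) :
    Tendsto
      (fun n => Pn n {ω | ∃ S : Finset (Vtx n),
        S.card = ⌈ε * (n : ℝ)⌉₊ ∧ (Gn n ω).IsClique (S : Set (Vtx n))})
      atTop (nhds (0 : ℝ≥0∞)) := by
  have hbound : ∀ n : ℕ,
      Pn n {ω | ∃ S : Finset (Vtx n),
        S.card = ⌈ε * (n : ℝ)⌉₊ ∧ (Gn n ω).IsClique (S : Set (Vtx n))}
      ≤ (2 : ℝ≥0∞) ^ (2 * n) * (3 / 4 : ℝ≥0∞) ^ ((⌈ε * (n : ℝ)⌉₊).choose 2) :=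
    fun n => aux_union_bound n _
  have hr : (4 : ℝ≥0∞) * (3 / 4 : ℝ≥0∞) ^ 8 < 1 := by
    have h : (3 / 4 : ℝ≥0∞) = ((3 / 4 : ℝ≥0) : ℝ≥0∞) := by
      rw [ENNReal.coe_div (by norm_num)]; norm_num
    rw [h, show (4 : ℝ≥0∞) = ((4 : ℝ≥0) : ℝ≥0∞) by norm_num, ← ENNReal.coe_pow,
      ← ENNReal.coe_mul, ← ENNReal.coe_one, ENNReal.coe_lt_coe, ← NNReal.coe_lt_coe]
    push_cast
    norm_num
  have hB : Tendsto (fun n : ℕ => (2 : ℝ≥0∞) ^ (2 * n) * (3 / 4 : ℝ≥0∞) ^ ((⌈ε * (n : ℝ)⌉₊).choose 2))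
      atTop (nhds 0) := by
    apply tendsto_of_tendsto_of_tendsto_of_le_of_le' tendsto_const_nhds
      (ENNReal.tendsto_pow_atTop_nhds_zero_of_lt_one hr)
    · exact Eventually.of_forall (fun n => zero_le)
    · filter_upwards [aux_choose_ge ε hε] with n hn
      calc (2 : ℝ≥0∞) ^ (2 * n) * (3 / 4 : ℝ≥0∞) ^ ((⌈ε * (n : ℝ)⌉₊).choose 2)
          ≤ (2 : ℝ≥0∞) ^ (2 * n) * (3 / 4 : ℝ≥0∞) ^ (8 * n) := by
            apply mul_le_mul_right
            refine pow_le_pow_of_le_one zero_le ?_ hn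
            exact ENNReal.div_le_of_le_mul (by norm_num)
        _ = ((4 : ℝ≥0∞) * (3 / 4 : ℝ≥0∞) ^ 8) ^ n := by
            rw [mul_pow, ← pow_mul, pow_mul (2:ℝ≥0∞) 2 n]
            norm_num
  apply tendsto_of_tendsto_of_tendsto_of_le_of_le' tendsto_const_nhds hB
  · exact Eventually.of_forall (fun n => zero_le)
  · exact Eventually.of_forall hbound
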